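/- Let t, t₁, t₂, t₃ : J → ℝ be differentiable functions on an open interval J ⊆ ℝ satisfying the chain equations t₁' = t' − e^t + e^{t₁}, t₂' = t₁' − e^{t₁} + e^{t₂}, t₃' = t₂' − e^{t₂} + e^{t₃} on J, and suppose e^{t(x)} − e^{t₃(x)} ≠ 0 and e^{t₁(x)} − e^{t₂(x)} ≠ 0 for all x ∈ J. Then the cross-ratio F(x) = (e^{t(x)} − e^{t₂(x)})(e^{t₁(x)} − e^{t₃(x)}) / ((e^{t(x)} − e^{t₃(x)})(e^{t₁(x)} − e^{t₂(x)})) has zero derivative at every point of J (F is an x-integral of the chain t_{1x} = t_x − e^t + e^{t₁}). -/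

import Mathlib

/-- the cross-ratio
`F = (e^t - e^{t₂})(e^{t₁} - e^{t₃}) / ((e^t - e^{t₃})(e^{t₁} - e^{t₂}))`
is an x-integral of the chain `t_{1x} = t_x - e^t + e^{t₁}`. -/
theorem stmt_2 (J : Set ℝ) (hJ : IsOpen J) (hJc : J.OrdConnected)
    (t t₁ t₂ t₃ : ℝ → ℝ)
    (ht : ∀ x ∈ J, DifferentiableAt ℝ t x)
    (ht₁ : ∀ x ∈ J, DifferentiableAt ℝ t₁ x)
    (ht₂ : ∀ x ∈ J, DifferentiableAt ℝ t₂ x)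
    (ht₃ : ∀ x ∈ J, DifferentiableAt ℝ t₃ x)
    (hchain1 : ∀ x ∈ J, deriv t₁ x = deriv t x - Real.exp (t x) + Real.exp (t₁ x))
    (hchain2 : ∀ x ∈ J, deriv t₂ x = deriv t₁ x - Real.exp (t₁ x) + Real.exp (t₂ x))
    (hchain3 : ∀ x ∈ J, deriv t₃ x = deriv t₂ x - Real.exp (t₂ x) + Real.exp (t₃ x))
    (hne1 : ∀ x ∈ J, Real.exp (t x) - Real.exp (t₃ x) ≠ 0)
    (hne2 : ∀ x ∈ J, Real.exp (t₁ x) - Real.exp (t₂ x) ≠ 0) :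
    ∀ x ∈ J, deriv (fun y =>
      (Real.exp (t y) - Real.exp (t₂ y)) * (Real.exp (t₁ y) - Real.exp (t₃ y))
        / ((Real.exp (t y) - Real.exp (t₃ y)) * (Real.exp (t₁ y) - Real.exp (t₂ y)))) x
      = 0 := by
  intro x hx
  set a := deriv t x with ha
  set u := Real.exp (t x) with hu'
  set v := Real.exp (t₁ x) with hv'
  set w := Real.exp (t₂ x) with hw'
  set z := Real.exp (t₃ x) with hz'
  have hu : HasDerivAt (fun y => Real.exp (t y)) (u * a) x :=
    ((ht x hx).hasDerivAt).exp
  have hd1 : deriv t₁ x = a - u + v := hchain1 x hx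
  have hd2 : deriv t₂ x = a - u + w := by
    rw [hchain2 x hx, hd1]; ring
  have hd3 : deriv t₃ x = a - u + z := by
    rw [hchain3 x hx, hd2]; ring
  have hv : HasDerivAt (fun y => Real.exp (t₁ y)) (v * (a - u + v)) x := by
    have := ((ht₁ x hx).hasDerivAt).exp
    rwa [hd1] at this
  have hw : HasDerivAt (fun y => Real.exp (t₂ y)) (w * (a - u + w)) x := by
    have := ((ht₂ x hx).hasDerivAt).exp
    rwa [hd2] at this
  have hz : HasDerivAt (fun y => Real.exp (t₃ y)) (z * (a - u + z)) x := by
    have := ((ht₃ x hx).hasDerivAt).exp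
    rwa [hd3] at this
  have hN : HasDerivAt (fun y =>
      (Real.exp (t y) - Real.exp (t₂ y)) * (Real.exp (t₁ y) - Real.exp (t₃ y)))
      ((u * a - w * (a - u + w)) * (v - z) + (u - w) * (v * (a - u + v) - z * (a - u + z))) x :=
    (hu.sub hw).mul (hv.sub hz)
  have hD : HasDerivAt (fun y =>
      (Real.exp (t y) - Real.exp (t₃ y)) * (Real.exp (t₁ y) - Real.exp (t₂ y)))
      ((u * a - z * (a - u + z)) * (v - w) + (u - z) * (v * (a - u + v) - w * (a - u + w))) x :=
    (hu.sub hz).mul (hv.sub hw)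
  have hDne : (u - z) * (v - w) ≠ 0 := mul_ne_zero (hne1 x hx) (hne2 x hx)
  have hF : HasDerivAt (fun y =>
      (Real.exp (t y) - Real.exp (t₂ y)) * (Real.exp (t₁ y) - Real.exp (t₃ y))
        / ((Real.exp (t y) - Real.exp (t₃ y)) * (Real.exp (t₁ y) - Real.exp (t₂ y)))) _ x :=
    hN.div hD hDne
  rw [hF.deriv]
  rw [div_eq_zero_iff]
  left
  ring
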